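/- For every graphon W, t_{M²}(W) ≥ t_{F_{5,3}}(W), where M := K_{5,5} \ C_{10} and M² is the blow-up of M with p = 2 relative to one side of its bipartition. -/

import Mathlib

open MeasureTheory

/-- The unit box `[0,1]^ι`. -/
def unitBox (ι : Type*) : Set (ι → ℝ) := Set.univ.pi fun _ => Set.Icc (0 : ℝ) 1

/-- The homomorphism density of a bipartite graph, given by its parts `A`, `B` and
its edge set `E ⊆ A × B`, in a graphon `W`. -/
noncomputable def bipDensity {A B : Type*} [Fintype A] [Fintype B]
    (E : Finset (A × B)) (W : ℝ → ℝ → ℝ) : ℝ :=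
  ∫ x in unitBox A, ∫ y in unitBox B, ∏ e ∈ E, W (x e.1) (y e.2)

/-- The blow-up `H_A^p` of a bipartite graph relative to the side `A`. -/
def blowUp {A B : Type*} [Fintype A] [Fintype B] [DecidableEq A] [DecidableEq B]
    (E : Finset (A × B)) (p : ℕ) : Finset (A × (B × Fin p)) :=
  Finset.univ.filter fun q => (q.1, q.2.1) ∈ E

/-- The edge set of `M = K_{5,5} \ C_{10}`: the bipartite graph on `Z ∪ Z'`, two copies
of `ℤ₅`, where `i ∈ Z'` is adjacent to `i - 1, i, i + 1 ∈ Z`. -/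
def edgesM : Finset (ZMod 5 × ZMod 5) :=
  Finset.univ.filter fun p => p.1 = p.2 - 1 ∨ p.1 = p.2 ∨ p.1 = p.2 + 1

/-- The edge set of the `(5,3)`-incidence graph `F_{5,3}`, the bipartite graph on
`[5] ∪ {F ⊆ [5] : |F| = 3}` where `i` is adjacent to `F` iff `i ∈ F`. -/
def edgesF53 : Finset (Fin 5 × {F : Finset (Fin 5) // F.card = 3}) :=
  Finset.univ.filter fun p => p.1 ∈ p.2.1

/-! ### Auxiliary material -/

namespace MobiusAux

lemma measurableSet_unitBox (ι : Type*) [Countable ι] : MeasurableSet (unitBox ι) :=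
  MeasurableSet.univ_pi fun _ => measurableSet_Icc

lemma volume_unitBox (ι : Type*) [Fintype ι] : (volume : Measure (ι → ℝ)) (unitBox ι) = 1 := by
  rw [unitBox, volume_pi, Measure.pi_pi]
  simp [Real.volume_Icc]

/-- Factorization of an integral over the unit box of a product of functions of the
coordinates. -/
lemma factorize {κ : Type*} [Fintype κ] (G : κ → ℝ → ℝ) :
    ∫ y in unitBox κ, ∏ b, G b (y b) = ∏ b, ∫ t in Set.Icc (0:ℝ) 1, G b t := by
  rw [← integral_indicator (measurableSet_unitBox κ)]
  have hpt : ∀ y : κ → ℝ, (unitBox κ).indicator (fun y => ∏ b, G b (y b)) y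
      = ∏ b, (Set.Icc (0:ℝ) 1).indicator (G b) (y b) := by
    intro y
    by_cases hy : y ∈ unitBox κ
    · have hyb : ∀ b, y b ∈ Set.Icc (0:ℝ) 1 := fun b => (Set.mem_univ_pi.1 hy) b
      rw [Set.indicator_of_mem hy]
      exact Finset.prod_congr rfl fun b _ => (Set.indicator_of_mem (hyb b) _).symm
    · have hne : ¬ ∀ b, y b ∈ Set.Icc (0:ℝ) 1 := fun h => hy (Set.mem_univ_pi.2 h)
      obtain ⟨b, hb⟩ := not_forall.1 hne
      rw [Set.indicator_of_notMem hy]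
      exact (Finset.prod_eq_zero (Finset.mem_univ b) (Set.indicator_of_notMem hb _)).symm
  calc ∫ y, (unitBox κ).indicator (fun y => ∏ b, G b (y b)) y
      = ∫ y : κ → ℝ, ∏ b, (Set.Icc (0:ℝ) 1).indicator (G b) (y b) :=
        integral_congr_ae (Filter.Eventually.of_forall hpt)
    _ = ∏ b, ∫ t, (Set.Icc (0:ℝ) 1).indicator (G b) t :=
        integral_fintype_prod_eq_prod fun b => (Set.Icc (0:ℝ) 1).indicator (G b)
    _ = ∏ b, ∫ t in Set.Icc (0:ℝ) 1, G b t := by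
        refine Finset.prod_congr rfl fun b _ => ?_
        rw [integral_indicator measurableSet_Icc]

/-- `hW W x S = ∫_0^1 ∏_{a ∈ S} W (x a) t dt`. -/
noncomputable def hW (W : ℝ → ℝ → ℝ) {ι : Type*} (x : ι → ℝ) (S : Finset ι) : ℝ :=
  ∫ t in Set.Icc (0:ℝ) 1, ∏ a ∈ S, W (x a) t

/-- Factorization, in the form used below. -/
lemma factorizeS {κ ι : Type*} [Fintype κ] (W : ℝ → ℝ → ℝ) (x : ι → ℝ) (S : κ → Finset ι) :
    ∫ y in unitBox κ, ∏ b, ∏ a ∈ S b, W (x a) (y b) = ∏ b, hW W x (S b) := by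
  unfold hW
  exact factorize fun (b : κ) (t : ℝ) => ∏ a ∈ S b, W (x a) t

/-- Factorization over a product index type. -/
lemma factorizeP {β ι : Type*} [Fintype β] (n : ℕ) (W : ℝ → ℝ → ℝ) (x : ι → ℝ)
    (S : β → Finset ι) :
    ∫ y in unitBox (β × Fin n), ∏ b : β × Fin n, ∏ a ∈ S b.1, W (x a) (y b)
      = ∏ b : β × Fin n, hW W x (S b.1) :=
  factorizeS W x fun b : β × Fin n => S b.1

/-- Change of variables along a permutation of coordinates. -/
lemma transfer {ι κ : Type*} [Fintype ι] [Fintype κ] (e : ι ≃ κ) (G : (κ → ℝ) → ℝ) :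
    ∫ x in unitBox κ, G x = ∫ x in unitBox ι, G (fun k => x (e.symm k)) := by
  set T := MeasurableEquiv.piCongrLeft (fun _ : κ => ℝ) e with hTdef
  have hT : ∀ (x : ι → ℝ) (k : κ), T x k = x (e.symm k) := by
    intro x k
    conv_lhs => rw [← e.apply_symm_apply k]
    rw [hTdef, MeasurableEquiv.coe_piCongrLeft]
    exact Equiv.piCongrLeft_apply_apply (fun _ => ℝ) e x (e.symm k)
  have hmp : MeasurePreserving T volume volume :=
    volume_measurePreserving_piCongrLeft (fun _ : κ => ℝ) e
  have hpre : T ⁻¹' unitBox κ = unitBox ι := by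
    ext x
    simp only [Set.mem_preimage, unitBox, Set.mem_univ_pi, hT]
    exact ⟨fun h i => by simpa using h (e i), fun h k => h _⟩
  rw [← hmp.setIntegral_preimage_emb T.measurableEmbedding G (unitBox κ), hpre]
  refine integral_congr_ae (Filter.Eventually.of_forall fun x => ?_)
  show G (T x) = G fun k => x (e.symm k)
  congr 1
  funext k
  exact hT x k

section Whyp
variable {W : ℝ → ℝ → ℝ}

lemma hW_nonneg (hWmem : ∀ x y, W x y ∈ Set.Icc (0 : ℝ) 1)
    {ι : Type*} (x : ι → ℝ) (S : Finset ι) : 0 ≤ hW W x S :=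
  setIntegral_nonneg measurableSet_Icc fun t _ =>
    Finset.prod_nonneg fun a _ => (hWmem _ _).1

lemma hW_le_one (hWmem : ∀ x y, W x y ∈ Set.Icc (0 : ℝ) 1)
    {ι : Type*} (x : ι → ℝ) (S : Finset ι) : hW W x S ≤ 1 := by
  have hb : ∀ t ∈ Set.Icc (0:ℝ) 1, ‖∏ a ∈ S, W (x a) t‖ ≤ 1 := by
    intro t _
    rw [Real.norm_eq_abs, abs_of_nonneg (Finset.prod_nonneg fun a _ => (hWmem _ _).1)]
    exact Finset.prod_le_one (fun a _ => (hWmem _ _).1) fun a _ => (hWmem _ _).2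
  have h := norm_setIntegral_le_of_norm_le_const
    (by simp [Real.volume_Icc] : (volume : Measure ℝ) (Set.Icc (0:ℝ) 1) < ⊤)
    hb
  have h' : ‖hW W x S‖ ≤ 1 := by simpa [hW, Measure.real, Real.volume_Icc] using h
  exact (le_abs_self _).trans (by rwa [Real.norm_eq_abs] at h')

lemma measurable_hW (hWmeas : Measurable (Function.uncurry W)) {ι : Type*} (S : Finset ι) :
    Measurable fun x : ι → ℝ => hW W x S := by
  have hsm : StronglyMeasurable fun p : (ι → ℝ) × ℝ => ∏ a ∈ S, W (p.1 a) p.2 := by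
    refine (Finset.measurable_prod S fun a _ => ?_).stronglyMeasurable
    have h1 : Measurable fun p : (ι → ℝ) × ℝ => (p.1 a, p.2) :=
      (measurable_fst.eval).prodMk measurable_snd
    exact hWmeas.comp h1
  exact hsm.integral_prod_right'.measurable

end Whyp

/-- Consecutive triples in `ℤ₅`. -/
def cset (i : ZMod 5) : Finset (ZMod 5) := {i - 1, i, i + 1}

/-- The doubling permutation of `ℤ₅`. -/
def dblE : ZMod 5 ≃ ZMod 5 :=
  ⟨fun a => 2 * a, fun a => 3 * a, by decide, by decide⟩

/-- Nonconsecutive triples in `ℤ₅`. -/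
def dset (i : ZMod 5) : Finset (ZMod 5) := (cset i).image dblE

/-- `ZMod 5` is definitionally `Fin 5`. -/
def zfE : ZMod 5 ≃ Fin 5 := ⟨fun a => a, fun a => a, fun _ => rfl, fun _ => rfl⟩

lemma neighbors_M : ∀ i : ZMod 5,
    Finset.univ.filter (fun a => (a, i) ∈ edgesM) = cset i := by decide

lemma image_dset : ∀ i : ZMod 5, (dset i).image (⇑dblE.symm) = cset i := by decide

lemma triples_split :
    Multiset.map (fun F : {F : Finset (Fin 5) // F.card = 3} => F.1.image (⇑zfE.symm))
        (Finset.univ.val)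
      = Multiset.map cset Finset.univ.val + Multiset.map dset Finset.univ.val := by decide

end MobiusAux

/-- for every graphon `W`, `t_{M²}(W) ≥ t_{F_{5,3}}(W)`, where
`M²` is the blow-up of `M = K_{5,5} \ C_{10}` with `p = 2` relative to one side. -/
theorem mobius_squared_ge_incidence
    (W : ℝ → ℝ → ℝ) (hWmeas : Measurable (Function.uncurry W))
    (hWsymm : ∀ x y, W x y = W y x) (hWmem : ∀ x y, W x y ∈ Set.Icc (0 : ℝ) 1) :
    bipDensity (blowUp edgesM 2) W ≥ bipDensity edgesF53 W := by
  classical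
  open MobiusAux in
  set P : (ZMod 5 → ℝ) → ℝ := fun x => ∏ i : ZMod 5, hW W x (cset i) with hP
  set Q : (ZMod 5 → ℝ) → ℝ := fun x => ∏ i : ZMod 5, hW W x (dset i) with hQ
  -- Step 1: the left-hand side equals `∫ P²`.
  have hL : bipDensity (blowUp edgesM 2) W = ∫ x in unitBox (ZMod 5), (P x) ^ 2 := by
    unfold bipDensity
    refine integral_congr_ae (Filter.Eventually.of_forall fun x => ?_)
    have step1 : ∀ y : (ZMod 5 × Fin 2) → ℝ,
        ∏ e ∈ blowUp edgesM 2, W (x e.1) (y e.2)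
          = ∏ b : ZMod 5 × Fin 2, ∏ a ∈ cset b.1, W (x a) (y b) := by
      intro y
      unfold blowUp
      rw [Finset.prod_filter, Fintype.prod_prod_type, Finset.prod_comm]
      refine Finset.prod_congr rfl fun b _ => ?_
      rw [← Finset.prod_filter, neighbors_M b.1]
    calc ∫ y in unitBox (ZMod 5 × Fin 2), ∏ e ∈ blowUp edgesM 2, W (x e.1) (y e.2)
        = ∫ y in unitBox (ZMod 5 × Fin 2),
            ∏ b : ZMod 5 × Fin 2, ∏ a ∈ cset b.1, W (x a) (y b) :=
          integral_congr_ae (Filter.Eventually.of_forall step1)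
      _ = ∏ b : ZMod 5 × Fin 2, hW W x (cset b.1) := factorizeP 2 W x cset
      _ = ∏ i : ZMod 5, (hW W x (cset i)) ^ 2 := by
          rw [Fintype.prod_prod_type]
          refine Finset.prod_congr rfl fun i _ => ?_
          simp [Finset.prod_const]
      _ = (P x) ^ 2 := by rw [hP, Finset.prod_pow]
  -- Step 2: the right-hand side equals `∫ P * Q`.
  have hR : bipDensity edgesF53 W = ∫ x in unitBox (ZMod 5), P x * Q x := by
    unfold bipDensity
    have h1 : ∀ x : Fin 5 → ℝ,
        (∫ y in unitBox {F : Finset (Fin 5) // F.card = 3},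
          ∏ e ∈ edgesF53, W (x e.1) (y e.2))
        = ∏ F : {F : Finset (Fin 5) // F.card = 3}, hW W x F.1 := by
      intro x
      have step1 : ∀ y : {F : Finset (Fin 5) // F.card = 3} → ℝ,
          ∏ e ∈ edgesF53, W (x e.1) (y e.2)
            = ∏ F : {F : Finset (Fin 5) // F.card = 3}, ∏ a ∈ F.1, W (x a) (y F) := by
        intro y
        unfold edgesF53
        rw [Finset.prod_filter, Fintype.prod_prod_type, Finset.prod_comm]
        refine Finset.prod_congr rfl fun F _ => ?_
        rw [← Finset.prod_filter]
        congr 1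
        ext a
        simp
      calc ∫ y in unitBox {F : Finset (Fin 5) // F.card = 3},
             ∏ e ∈ edgesF53, W (x e.1) (y e.2)
          = ∫ y in unitBox {F : Finset (Fin 5) // F.card = 3},
              ∏ F : {F : Finset (Fin 5) // F.card = 3}, ∏ a ∈ F.1, W (x a) (y F) :=
            integral_congr_ae (Filter.Eventually.of_forall step1)
        _ = ∏ F : {F : Finset (Fin 5) // F.card = 3}, hW W x F.1 :=
            factorizeS W x Subtype.val
    calc ∫ x in unitBox (Fin 5), ∫ y in unitBox {F : Finset (Fin 5) // F.card = 3},
           ∏ e ∈ edgesF53, W (x e.1) (y e.2)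
        = ∫ x in unitBox (Fin 5), ∏ F : {F : Finset (Fin 5) // F.card = 3}, hW W x F.1 :=
          integral_congr_ae (Filter.Eventually.of_forall fun x => h1 x)
      _ = ∫ x in unitBox (ZMod 5),
            ∏ F : {F : Finset (Fin 5) // F.card = 3}, hW W x (F.1.image (⇑zfE.symm)) := by
          rw [transfer zfE]
          refine integral_congr_ae (Filter.Eventually.of_forall fun x => ?_)
          show (∏ F : {F : Finset (Fin 5) // F.card = 3}, hW W (fun k => x (zfE.symm k)) F.1)
              = ∏ F : {F : Finset (Fin 5) // F.card = 3}, hW W x (F.1.image (⇑zfE.symm))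
          refine Finset.prod_congr rfl fun F _ => ?_
          unfold hW
          refine integral_congr_ae (Filter.Eventually.of_forall fun t => ?_)
          show (∏ a ∈ F.1, W (x (zfE.symm a)) t) = ∏ a ∈ F.1.image (⇑zfE.symm), W (x a) t
          rw [Finset.prod_image fun a _ b _ h => zfE.symm.injective h]
      _ = ∫ x in unitBox (ZMod 5), P x * Q x := by
          refine integral_congr_ae (Filter.Eventually.of_forall fun x => ?_)
          calc ∏ F : {F : Finset (Fin 5) // F.card = 3}, hW W x (F.1.image (⇑zfE.symm))
              = (Multiset.map ((hW W x) ∘ fun F : {F : Finset (Fin 5) // F.card = 3} =>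
                  F.1.image (⇑zfE.symm)) Finset.univ.val).prod := rfl
            _ = ((Multiset.map (fun F : {F : Finset (Fin 5) // F.card = 3} =>
                  F.1.image (⇑zfE.symm)) Finset.univ.val).map (hW W x)).prod := by
                rw [Multiset.map_map]
            _ = ((Multiset.map cset Finset.univ.val
                  + Multiset.map dset Finset.univ.val).map (hW W x)).prod := by
                rw [triples_split]
            _ = P x * Q x := by
                rw [Multiset.map_add, Multiset.prod_add, hP, hQ]
                rfl
  -- Step 3: `∫ Q² = ∫ P²` by the doubling substitution.
  have hQ2 : (∫ x in unitBox (ZMod 5), (Q x) ^ 2) = ∫ x in unitBox (ZMod 5), (P x) ^ 2 := by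
    rw [transfer dblE (fun x => (Q x) ^ 2)]
    refine integral_congr_ae (Filter.Eventually.of_forall fun x => ?_)
    have key : Q (fun k => x (dblE.symm k)) = P x := by
      simp only [hP, hQ]
      refine Finset.prod_congr rfl fun i _ => ?_
      rw [← image_dset i]
      unfold hW
      refine integral_congr_ae (Filter.Eventually.of_forall fun t => ?_)
      show (∏ a ∈ dset i, W (x (dblE.symm a)) t)
          = ∏ a ∈ (dset i).image (⇑dblE.symm), W (x a) t
      rw [Finset.prod_image fun a _ b _ h => dblE.symm.injective h]
    show (Q fun k => x (dblE.symm k)) ^ 2 = P x ^ 2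
    rw [key]
  -- Step 4: Cauchy–Schwarz.
  haveI hfin : IsFiniteMeasure ((volume : Measure (ZMod 5 → ℝ)).restrict (unitBox (ZMod 5))) := by
    constructor
    rw [Measure.restrict_apply_univ, volume_unitBox]
    exact ENNReal.one_lt_top
  have hPmeas : Measurable P := Finset.measurable_prod _ fun i _ => measurable_hW hWmeas _
  have hQmeas : Measurable Q := Finset.measurable_prod _ fun i _ => measurable_hW hWmeas _
  have hPnn : ∀ x, 0 ≤ P x := fun x => Finset.prod_nonneg fun i _ => hW_nonneg hWmem _ _
  have hQnn : ∀ x, 0 ≤ Q x := fun x => Finset.prod_nonneg fun i _ => hW_nonneg hWmem _ _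
  have hPle : ∀ x, P x ≤ 1 := fun x =>
    Finset.prod_le_one (fun i _ => hW_nonneg hWmem _ _) fun i _ => hW_le_one hWmem _ _
  have hQle : ∀ x, Q x ≤ 1 := fun x =>
    Finset.prod_le_one (fun i _ => hW_nonneg hWmem _ _) fun i _ => hW_le_one hWmem _ _
  set μ := (volume : Measure (ZMod 5 → ℝ)).restrict (unitBox (ZMod 5)) with hμ
  have hPmem : MemLp P (ENNReal.ofReal 2) μ :=
    MemLp.of_bound (hPmeas.aestronglyMeasurable) 1
      (Filter.Eventually.of_forall fun x => by
        rw [Real.norm_eq_abs, abs_of_nonneg (hPnn x)]; exact hPle x)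
  have hQmem : MemLp Q (ENNReal.ofReal 2) μ :=
    MemLp.of_bound (hQmeas.aestronglyMeasurable) 1
      (Filter.Eventually.of_forall fun x => by
        rw [Real.norm_eq_abs, abs_of_nonneg (hQnn x)]; exact hQle x)
  have hpq : Real.HolderConjugate 2 2 := Real.holderConjugate_iff.mpr ⟨one_lt_two, by norm_num⟩
  have hcs := integral_mul_le_Lp_mul_Lq_of_nonneg hpq
    (Filter.Eventually.of_forall hPnn) (Filter.Eventually.of_forall hQnn) hPmem hQmem
  have hrpow : ∀ f : (ZMod 5 → ℝ) → ℝ, (∫ x, f x ^ (2:ℝ) ∂μ) = ∫ x, (f x) ^ 2 ∂μ := by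
    intro f
    refine integral_congr_ae (Filter.Eventually.of_forall fun x => ?_)
    show f x ^ (2:ℝ) = f x ^ 2
    exact Real.rpow_two (f x)
  rw [hrpow P, hrpow Q] at hcs
  have hI : (∫ x, (Q x) ^ 2 ∂μ) = ∫ x, (P x) ^ 2 ∂μ := hQ2
  rw [hI] at hcs
  have hInn : 0 ≤ ∫ x, (P x) ^ 2 ∂μ := integral_nonneg fun x => sq_nonneg _
  have hfinal : (∫ x, P x * Q x ∂μ) ≤ ∫ x, (P x) ^ 2 ∂μ := by
    refine hcs.trans_eq ?_
    rw [← Real.sqrt_eq_rpow]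
    exact Real.mul_self_sqrt hInn
  rw [ge_iff_le, hL, hR]
  exact hfinal
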